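/- If Γ is a disconnected homomorphism homogeneous oriented graph, then every weakly connected component of Γ is a tournament. -/

import Mathlib

def IsOriented {V : Type*} (E : V → V → Prop) : Prop := ∀ x y, E x y → ¬ E y x

def IsLocHom {V : Type*} (E : V → V → Prop) (A : Finset V) (f : V → V) : Prop :=
  ∀ x ∈ A, ∀ y ∈ A, E x y → E (f x) (f y)

def IsHH {V : Type*} (E : V → V → Prop) : Prop :=
  ∀ (A : Finset V) (f : V → V), IsLocHom E A f →
    ∃ g : V → V, (∀ x y, E x y → E (g x) (g y)) ∧ ∀ x ∈ A, g x = f x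

theorem components_are_tournaments {V : Type*} (E : V → V → Prop)
    (hor : IsOriented E) (hhh : IsHH E)
    (hdisc : ∃ x y : V, ¬ Relation.ReflTransGen (fun a b => E a b ∨ E b a) x y) :
    ∀ x y : V, Relation.ReflTransGen (fun a b => E a b ∨ E b a) x y →
      x ≠ y → E x y ∨ E y x := by
  classical
  obtain ⟨p, q, hpq⟩ := hdisc
  intro x y hxy hne
  by_contra hno
  push_neg at hno
  obtain ⟨h1, h2⟩ := hno
  set f : V → V := fun z => if z = x then p else q with hf
  have hloc : IsLocHom E ({x, y} : Finset V) f := by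
    intro a ha b hb hab
    simp only [Finset.mem_insert, Finset.mem_singleton] at ha hb
    rcases ha with rfl | rfl <;> rcases hb with rfl | rfl
    · exact absurd hab (hor _ _ hab)
    · exact absurd hab h1
    · exact absurd hab h2
    · exact absurd hab (hor _ _ hab)
  obtain ⟨g, hg, hga⟩ := hhh _ f hloc
  have hgx : g x = p := by
    rw [hga x (by simp)]; simp [hf]
  have hgy : g y = q := by
    rw [hga y (by simp)]; simp [hf, hne.symm]
  apply hpq
  rw [← hgx, ← hgy]
  exact Relation.ReflTransGen.lift g (fun a b (h : E a b ∨ E b a) => h.imp (hg a b) (hg b a)) x y hxy
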